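/- Let x be a non-uniform lattice of either class and λ ∈ ℂ. Then for every function w : ℂ → ℂ and every z ∈ ℂ at which the occurring denominators are nonzero: σ(z+1)·Δ_{−1}∇_0 w(z) − τ_{−2}(z+1)·∇_0 w(z) + (λ − κ_{−1})·w(z) = σ̃_{−2}(z+1)·Δ_{−1}∇_0 w(z) − ½·τ_{−2}(z+1)·[Δ_0 w(z) + ∇_0 w(z)] + (λ − κ_{−1})·w(z); moreover there exist constants A, B, C, D, E ∈ ℂ such that σ̃_{−2}(z+1) = A·x(z)² + B·x(z) + C and τ_{−2}(z+1) = D·x(z) + E at all such z. Hence the adjoint equation of the Nikiforov–Uvarov–Suslov equation σ(z)·Δ_{−1}∇_0 y + τ(z)·Δ_0 y + λ·y = 0 is again a difference equation of hypergeometric type on the non-uniform lattice. (Corollary 3.3) -/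
import Mathlib

set_option maxHeartbeats 1000000

noncomputable section

open Finset

/-- `x` is a non-uniform lattice of one of the two classes (q-quadratic with
`q = e^w`, or quadratic), together with its associated functions `α = a` and
`γ = g`. -/
def IsNonUniformLattice (w : ℂ) (x : ℂ → ℂ) (a g : ℝ → ℂ) : Prop :=
  (Complex.exp w ≠ 1 ∧
    ∃ c1 c2 c3 : ℂ, c1 * c2 ≠ 0 ∧
      (∀ s : ℂ, x s = c1 * Complex.exp (s * w) + c2 * Complex.exp (-(s * w)) + c3) ∧
      (∀ μ : ℝ, a μ =
        (Complex.exp ((μ : ℂ) / 2 * w) + Complex.exp (-((μ : ℂ) / 2 * w))) / 2) ∧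
      (∀ μ : ℝ, g μ =
        (Complex.exp ((μ : ℂ) / 2 * w) - Complex.exp (-((μ : ℂ) / 2 * w))) /
          (Complex.exp ((1 : ℂ) / 2 * w) - Complex.exp (-((1 : ℂ) / 2 * w))))) ∨
  (∃ c1 c2 c3 : ℂ, c1 ≠ 0 ∧
    (∀ s : ℂ, x s = c1 * s ^ 2 + c2 * s + c3) ∧
    (∀ μ : ℝ, a μ = 1) ∧ (∀ μ : ℝ, g μ = (μ : ℂ)))

/-- `xl x ν s = x_ν(s) = x (s + ν/2)`. -/
def xl (x : ℂ → ℂ) (ν : ℝ) (s : ℂ) : ℂ := x (s + (ν : ℂ) / 2)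

/-- `σ(z) = σ̃(x z) - (1/2)·τ̃(x z)·∇x₁(z)`. -/
def sig (x : ℂ → ℂ) (st tt : Polynomial ℂ) (z : ℂ) : ℂ :=
  st.eval (x z) - (1 / 2) * tt.eval (x z) * (xl x 1 z - xl x 1 (z - 1))

/-- `κ_ν = α(ν-1)·τ̃' + (1/2)·γ(ν-1)·σ̃''`. -/
def kap (a g : ℝ → ℂ) (st tt : Polynomial ℂ) (ν : ℝ) : ℂ :=
  a (ν - 1) * tt.coeff 1 + (1 / 2) * g (ν - 1) * (2 * st.coeff 2)

/-- Backward difference quotient `∇_ν f (z) = ∇f(z)/∇x_ν(z)`. -/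
def nab (x : ℂ → ℂ) (ν : ℝ) (f : ℂ → ℂ) (z : ℂ) : ℂ :=
  (f z - f (z - 1)) / (xl x ν z - xl x ν (z - 1))

/-- Forward difference quotient `Δ_ν f (z) = Δf(z)/Δx_ν(z)`. -/
def del (x : ℂ → ℂ) (ν : ℝ) (f : ℂ → ℂ) (z : ℂ) : ℂ :=
  (f (z + 1) - f z) / (xl x ν (z + 1) - xl x ν z)

/-- Generalized power `[x_α(s) - x_α(z)]^{(m)} = ∏_{k=0}^{m-1} (x_α(s) - x_α(z-k))`. -/
def gp (x : ℂ → ℂ) (m : ℕ) (al : ℝ) (s z : ℂ) : ℂ :=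
  ∏ k ∈ Finset.range m, (xl x al s - xl x al (z - (k : ℂ)))

/-- The defining relation for the family `τ_ν = T ν`:
`τ_ν(z)·∇x_{ν+1}(z) = σ(z+ν) - σ(z) + τ(z+ν)·∇x₁(z+ν)`. -/
def TauFamily (x : ℂ → ℂ) (st tt : Polynomial ℂ) (T : ℝ → ℂ → ℂ) : Prop :=
  ∀ (ν : ℝ) (z : ℂ),
    T ν z * (xl x (ν + 1) z - xl x (ν + 1) (z - 1)) =
      sig x st tt (z + (ν : ℂ)) - sig x st tt z +
        tt.eval (x (z + (ν : ℂ))) * (xl x 1 (z + (ν : ℂ)) - xl x 1 (z + (ν : ℂ) - 1))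


lemma evalC2 {p : Polynomial ℂ} (hp : p.degree ≤ 2) (y : ℂ) :
    p.eval y = p.coeff 0 + p.coeff 1 * y + p.coeff 2 * y ^ 2 := by
  have h : p.natDegree < 3 :=
    lt_of_le_of_lt (Polynomial.natDegree_le_iff_degree_le.mpr (by exact_mod_cast hp)) (by norm_num)
  rw [Polynomial.eval_eq_sum_range' h]
  simp [Finset.sum_range_succ]

lemma evalC1 {p : Polynomial ℂ} (hp : p.degree ≤ 1) (y : ℂ) :
    p.eval y = p.coeff 0 + p.coeff 1 * y := by
  have h : p.natDegree < 2 :=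
    lt_of_le_of_lt (Polynomial.natDegree_le_iff_degree_le.mpr (by exact_mod_cast hp)) (by norm_num)
  rw [Polynomial.eval_eq_sum_range' h]
  simp [Finset.sum_range_succ]

lemma expG (a b s : ℂ) (k : ℕ) (h : s = a + k*b) :
    Complex.exp s = Complex.exp a * Complex.exp b ^ k := by
  rw [h, Complex.exp_add, Complex.exp_nat_mul]

lemma part1' (S Tv L a b c P Q R : ℂ) (hR : R ≠ 0) :
    S * (((a-b)/P - (b-c)/Q)/R) - Tv * ((b-c)/Q) + L * b =
      (S + 1/2 * Tv * R) * (((a-b)/P - (b-c)/Q)/R) -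
        1/2 * Tv * ((a-b)/P + (b-c)/Q) + L * b := by
  have h : ((a-b)/P - (b-c)/Q)/R * R = (a-b)/P - (b-c)/Q := div_mul_cancel₀ _ hR
  have h2 : R * R⁻¹ = 1 := mul_inv_cancel₀ hR
  linear_combination (Tv/2) * h + (Tv*(-a*P⁻¹+b*P⁻¹+b*Q⁻¹-c*Q⁻¹))*h2

lemma part1 (x : ℂ → ℂ) (S Tv L : ℂ) (wf : ℂ → ℂ) (z : ℂ)
    (h3 : xl x (-1) (z+1) - xl x (-1) z ≠ 0) :
    S * del x (-1) (nab x 0 wf) z - Tv * nab x 0 wf z + L * wf z =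
      (S + 1/2 * Tv * (xl x (-1) (z+1) - xl x (-1) z)) * del x (-1) (nab x 0 wf) z -
        1/2 * Tv * (del x 0 wf z + nab x 0 wf z) + L * wf z := by
  simp only [del, nab]
  rw [show z+1-1 = z from by ring]
  exact part1' S Tv L (wf (z+1)) (wf z) (wf (z-1)) _ _ _ h3

/-- Corollary 3.3: the adjoint equation of the Nikiforov–Uvarov–Suslov equation
is again a difference equation of hypergeometric type. -/
theorem cor3_3
    (w : ℂ) (x : ℂ → ℂ) (a g : ℝ → ℂ)
    (hlat : IsNonUniformLattice w x a g)
    (st tt : Polynomial ℂ) (hst : st.degree ≤ 2) (htt : tt.degree ≤ 1)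
    (T : ℝ → ℂ → ℂ) (hT : TauFamily x st tt T) (lam : ℂ) :
    ∃ A B C D E : ℂ, ∀ (wf : ℂ → ℂ) (z : ℂ),
      xl x 0 (z + 1) - xl x 0 z ≠ 0 →
      xl x 0 z - xl x 0 (z - 1) ≠ 0 →
      xl x (-1) (z + 1) - xl x (-1) z ≠ 0 →
      (sig x st tt (z + 1) * del x (-1) (nab x 0 wf) z -
          T (-2) (z + 1) * nab x 0 wf z + (lam - kap a g st tt (-1)) * wf z =
        (sig x st tt (z + 1) + (1 / 2) * T (-2) (z + 1) *
            (xl x (-1) (z + 1) - xl x (-1) z)) * del x (-1) (nab x 0 wf) z -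
          (1 / 2) * T (-2) (z + 1) * (del x 0 wf z + nab x 0 wf z) +
          (lam - kap a g st tt (-1)) * wf z) ∧
      (sig x st tt (z + 1) + (1 / 2) * T (-2) (z + 1) *
          (xl x (-1) (z + 1) - xl x (-1) z) = A * x z ^ 2 + B * x z + C) ∧
      (T (-2) (z + 1) = D * x z + E) := by
  rcases hlat with ⟨hq, c1, c2, c3, hcc, hx, ha, hg⟩ | ⟨c1, c2, c3, hc1, hx, ha, hg⟩
  · -- q-quadratic case
    obtain ⟨e, he⟩ : ∃ e, e = Complex.exp (w/2) := ⟨_, rfl⟩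
    obtain ⟨f, hf⟩ : ∃ f, f = Complex.exp (-(w/2)) := ⟨_, rfl⟩
    have hef : e * f = 1 := by
      rw [he, hf, ← Complex.exp_add]; simp
    refine ⟨((st.coeff 2)*(e^8+1)*f^4/2 - (tt.coeff 1)*(e^2-1)*(e^8-1)*f^5/4), ((e^4+1)*f^2/2*((st.coeff 1)+2*(st.coeff 2)*c3) - (e^2-1)*(e^4-1)*f^3/4*((tt.coeff 0)+(tt.coeff 1)*c3)) - 2*((st.coeff 2)*(e^8+1)*f^4/2 - (tt.coeff 1)*(e^2-1)*(e^8-1)*f^5/4)*c3, ((st.coeff 0)+(st.coeff 1)*c3+(st.coeff 2)*c3^2 + 4*c1*c2*((e^2-1)*(e^8-1)*f^5/8*(tt.coeff 1) - (st.coeff 2)*(e^4-1)^2*f^4/4)) - ((e^4+1)*f^2/2*((st.coeff 1)+2*(st.coeff 2)*c3) - (e^2-1)*(e^4-1)*f^3/4*((tt.coeff 0)+(tt.coeff 1)*c3))*c3 + ((st.coeff 2)*(e^8+1)*f^4/2 - (tt.coeff 1)*(e^2-1)*(e^8-1)*f^5/4)*c3^2, (-(st.coeff 2)*(e^4+1)*(e^2+1)*f^3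 + (tt.coeff 1)*(e^8+1)*f^4/2), ((-((st.coeff 1)+2*(st.coeff 2)*c3)*(e^2+1)*f + (e^4+1)*f^2/2*((tt.coeff 0)+(tt.coeff 1)*c3)) - (-(st.coeff 2)*(e^4+1)*(e^2+1)*f^3 + (tt.coeff 1)*(e^8+1)*f^4/2)*c3), ?_⟩
    intro wf z h1 h2 h3
    obtain ⟨u, hu⟩ : ∃ u, u = Complex.exp (z*w) := ⟨_, rfl⟩
    obtain ⟨v, hv⟩ : ∃ v, v = Complex.exp (-(z*w)) := ⟨_, rfl⟩
    have huv : u * v = 1 := by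
      rw [hu, hv, ← Complex.exp_add]; simp
    have F0 : Complex.exp ((z+1)*w) = u * e^2 := by
      rw [hu, he]; exact expG (z*w) (w/2) _ 2 (by push_cast; ring)
    have G0 : Complex.exp (-((z+1)*w)) = v * f^2 := by
      rw [hv, hf]; exact expG (-(z*w)) (-(w/2)) _ 2 (by push_cast; ring)
    have F1 : Complex.exp ((z-1)*w) = u * f^2 := by
      rw [hu, hf]; exact expG (z*w) (-(w/2)) _ 2 (by push_cast; ring)
    have G1 : Complex.exp (-((z-1)*w)) = v * e^2 := by
      rw [hv, he]; exact expG (-(z*w)) (w/2) _ 2 (by push_cast; ring)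
    have F2 : Complex.exp ((z+1+((1:ℝ):ℂ)/2)*w) = u * e^3 := by
      rw [hu, he]; exact expG (z*w) (w/2) _ 3 (by push_cast; ring)
    have G2 : Complex.exp (-((z+1+((1:ℝ):ℂ)/2)*w)) = v * f^3 := by
      rw [hv, hf]; exact expG (-(z*w)) (-(w/2)) _ 3 (by push_cast; ring)
    have F3 : Complex.exp ((z+1-1+((1:ℝ):ℂ)/2)*w) = u * e^1 := by
      rw [hu, he]; exact expG (z*w) (w/2) _ 1 (by push_cast; ring)
    have G3 : Complex.exp (-((z+1-1+((1:ℝ):ℂ)/2)*w)) = v * f^1 := by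
      rw [hv, hf]; exact expG (-(z*w)) (-(w/2)) _ 1 (by push_cast; ring)
    have F4 : Complex.exp ((z-1+((1:ℝ):ℂ)/2)*w) = u * f^1 := by
      rw [hu, hf]; exact expG (z*w) (-(w/2)) _ 1 (by push_cast; ring)
    have G4 : Complex.exp (-((z-1+((1:ℝ):ℂ)/2)*w)) = v * e^1 := by
      rw [hv, he]; exact expG (-(z*w)) (w/2) _ 1 (by push_cast; ring)
    have F5 : Complex.exp ((z-1-1+((1:ℝ):ℂ)/2)*w) = u * f^3 := by
      rw [hu, hf]; exact expG (z*w) (-(w/2)) _ 3 (by push_cast; ring)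
    have G5 : Complex.exp (-((z-1-1+((1:ℝ):ℂ)/2)*w)) = v * e^3 := by
      rw [hv, he]; exact expG (-(z*w)) (w/2) _ 3 (by push_cast; ring)
    have F6 : Complex.exp ((z-2+((1:ℝ):ℂ)/2)*w) = u * f^3 := by
      rw [hu, hf]; exact expG (z*w) (-(w/2)) _ 3 (by push_cast; ring)
    have G6 : Complex.exp (-((z-2+((1:ℝ):ℂ)/2)*w)) = v * e^3 := by
      rw [hv, he]; exact expG (-(z*w)) (w/2) _ 3 (by push_cast; ring)
    have F7 : Complex.exp ((z+1+((-1:ℝ):ℂ)/2)*w) = u * e^1 := by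
      rw [hu, he]; exact expG (z*w) (w/2) _ 1 (by push_cast; ring)
    have G7 : Complex.exp (-((z+1+((-1:ℝ):ℂ)/2)*w)) = v * f^1 := by
      rw [hv, hf]; exact expG (-(z*w)) (-(w/2)) _ 1 (by push_cast; ring)
    have F8 : Complex.exp ((z+((-1:ℝ):ℂ)/2)*w) = u * f^1 := by
      rw [hu, hf]; exact expG (z*w) (-(w/2)) _ 1 (by push_cast; ring)
    have G8 : Complex.exp (-((z+((-1:ℝ):ℂ)/2)*w)) = v * e^1 := by
      rw [hv, he]; exact expG (-(z*w)) (w/2) _ 1 (by push_cast; ring)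
    have hTz := hT (-2) (z+1)
    rw [show ((-2:ℝ)+1 : ℝ) = -1 from by norm_num] at hTz
    push_cast at hTz
    rw [show z+1+(-2:ℂ) = z-1 from by ring, show z+1-1 = z from by ring,
      show z-1-1 = z-2 from by ring] at hTz
    refine ⟨part1 x _ _ _ wf z h3, ?_, ?_⟩
    · rw [show (1:ℂ)/2 * T (-2) (z+1) * (xl x (-1) (z+1) - xl x (-1) z)
          = 1/2 * (T (-2) (z+1) * (xl x (-1) (z+1) - xl x (-1) z)) from mul_assoc _ _ _,
        hTz]
      simp only [sig, xl, hx, evalC2 hst, evalC1 htt, F0, G0, F1, G1, F2, G2, F3, G3, F4, G4, F5, G5, F6, G6, F7, G7, F8, G8, ← hu, ← hv]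
      linear_combination ((-1)*f^4*c1*c2*st.coeff 2 + ((1)/2)*f^5*c1*c2*tt.coeff 1 + ((1)/2)*e*f^2*c1*c2*tt.coeff 1 + ((1)/2)*e^2*f*c1*c2*tt.coeff 1 + (2)*e^2*f^2*c1*c2*st.coeff 2 + ((-1)/2)*e^2*f^3*c1*c2*tt.coeff 1 + ((-1)/2)*e^2*f^5*c1*c2*tt.coeff 1 + ((-1)/2)*e^3*f^2*c1*c2*tt.coeff 1 + (-1)*e^8*f^4*c1*c2*st.coeff 2 + ((-1)/2)*e^8*f^5*c1*c2*tt.coeff 1 + ((1)/2)*e^10*f^5*c1*c2*tt.coeff 1) * huv + (((-1)/2)*e*f^2*c1*c2*tt.coeff 1 + ((-1)/2)*e^2*f*c1*c2*tt.coeff 1 + (-2)*e^2*f^2*c1*c2*st.coeff 2 + (-2)*e^3*f^3*c1*c2*st.coeff 2 + ((-1)/4)*v*f*c2*tt.coeff 0 + ((-1)/4)*v*f*c2*c3*tt.coeff 1 + ((-1)/4)*v*e*c2*tt.coeff 0 + ((-1)/4)*v*e*c2*c3*tt.coeff 1 + ((-1)/4)*v*e*f^2*c2*tt.coeff 0 +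 ((-1)/4)*v*e*f^2*c2*c3*tt.coeff 1 + ((-1)/2)*v*e^2*c2*st.coeff 1 + (-1)*v*e^2*c2*c3*st.coeff 2 + ((-1)/4)*v*e^2*f*c2*tt.coeff 0 + ((-1)/4)*v*e^2*f*c2*c3*tt.coeff 1 + ((1)/4)*v*e^3*c2*tt.coeff 0 + ((1)/4)*v*e^3*c2*c3*tt.coeff 1 + ((-1)/2)*v*e^3*f*c2*st.coeff 1 + (-1)*v*e^3*f*c2*c3*st.coeff 2 + ((-1)/4)*v*e^3*f^2*c2*tt.coeff 0 + ((-1)/4)*v*e^3*f^2*c2*c3*tt.coeff 1 + ((1)/4)*v*e^4*f*c2*tt.coeff 0 + ((1)/4)*v*e^4*f*c2*c3*tt.coeff 1 + ((1)/4)*v*e^5*f^2*c2*tt.coeff 0 + ((1)/4)*v*e^5*f^2*c2*c3*tt.coeff 1 + ((-1)/4)*v^2*f^3*c2^2*tt.coeff 1 + ((-1)/4)*v^2*e*f^4*c2^2*tt.coeff 1 + ((-1)/4)*v^2*e^3*c2^2*tt.coeff 1 + ((-1)/2)*v^2*e^4*c2^2*st.coeff 2 + ((-1)/4)*v^2*e^4*f*c2^2*tt.coeff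 1 + ((1)/4)*v^2*e^5*c2^2*tt.coeff 1 + ((-1)/2)*v^2*e^5*f*c2^2*st.coeff 2 + ((-1)/4)*v^2*e^5*f^2*c2^2*tt.coeff 1 + ((1)/4)*v^2*e^6*f*c2^2*tt.coeff 1 + ((-1)/2)*v^2*e^6*f^2*c2^2*st.coeff 2 + ((-1)/4)*v^2*e^6*f^3*c2^2*tt.coeff 1 + ((1)/4)*v^2*e^7*f^2*c2^2*tt.coeff 1 + ((-1)/2)*v^2*e^7*f^3*c2^2*st.coeff 2 + ((-1)/4)*v^2*e^7*f^4*c2^2*tt.coeff 1 + ((1)/4)*v^2*e^8*f^3*c2^2*tt.coeff 1 + ((1)/4)*v^2*e^9*f^4*c2^2*tt.coeff 1 + ((-1)/4)*u*f*c1*tt.coeff 0 + ((-1)/4)*u*f*c1*c3*tt.coeff 1 + ((-1)/4)*u*e*c1*tt.coeff 0 + ((-1)/4)*u*e*c1*c3*tt.coeff 1 + ((-1)/4)*u*e*f^2*c1*tt.coeff 0 + ((-1)/4)*u*e*f^2*c1*c3*tt.coeff 1 + ((-1)/2)*u*e^2*c1*st.coeff 1 + (-1)*u*e^2*c1*c3*st.coeff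 2 + ((-1)/4)*u*e^2*f*c1*tt.coeff 0 + ((-1)/4)*u*e^2*f*c1*c3*tt.coeff 1 + ((1)/4)*u*e^3*c1*tt.coeff 0 + ((1)/4)*u*e^3*c1*c3*tt.coeff 1 + ((-1)/2)*u*e^3*f*c1*st.coeff 1 + (-1)*u*e^3*f*c1*c3*st.coeff 2 + ((-1)/4)*u*e^3*f^2*c1*tt.coeff 0 + ((-1)/4)*u*e^3*f^2*c1*c3*tt.coeff 1 + ((1)/4)*u*e^4*f*c1*tt.coeff 0 + ((1)/4)*u*e^4*f*c1*c3*tt.coeff 1 + ((1)/4)*u*e^5*f^2*c1*tt.coeff 0 + ((1)/4)*u*e^5*f^2*c1*c3*tt.coeff 1 + ((-1)/4)*u^2*f^3*c1^2*tt.coeff 1 + ((-1)/4)*u^2*e*f^4*c1^2*tt.coeff 1 + ((-1)/4)*u^2*e^3*c1^2*tt.coeff 1 + ((-1)/2)*u^2*e^4*c1^2*st.coeff 2 + ((-1)/4)*u^2*e^4*f*c1^2*tt.coeff 1 + ((1)/4)*u^2*e^5*c1^2*tt.coeff 1 + ((-1)/2)*u^2*e^5*f*c1^2*st.coeff 2 +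 ((-1)/4)*u^2*e^5*f^2*c1^2*tt.coeff 1 + ((1)/4)*u^2*e^6*f*c1^2*tt.coeff 1 + ((-1)/2)*u^2*e^6*f^2*c1^2*st.coeff 2 + ((-1)/4)*u^2*e^6*f^3*c1^2*tt.coeff 1 + ((1)/4)*u^2*e^7*f^2*c1^2*tt.coeff 1 + ((-1)/2)*u^2*e^7*f^3*c1^2*st.coeff 2 + ((-1)/4)*u^2*e^7*f^4*c1^2*tt.coeff 1 + ((1)/4)*u^2*e^8*f^3*c1^2*tt.coeff 1 + ((1)/4)*u^2*e^9*f^4*c1^2*tt.coeff 1) * hef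
    · have key : ((-(st.coeff 2)*(e^4+1)*(e^2+1)*f^3 + (tt.coeff 1)*(e^8+1)*f^4/2) * x z + ((-((st.coeff 1)+2*(st.coeff 2)*c3)*(e^2+1)*f + (e^4+1)*f^2/2*((tt.coeff 0)+(tt.coeff 1)*c3)) - (-(st.coeff 2)*(e^4+1)*(e^2+1)*f^3 + (tt.coeff 1)*(e^8+1)*f^4/2)*c3)) * (xl x (-1) (z+1) - xl x (-1) z) =
          sig x st tt (z-1) - sig x st tt (z+1) +
            Polynomial.eval (x (z-1)) tt * (xl x 1 (z-1) - xl x 1 (z-2)) := by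
        simp only [sig, xl, hx, evalC2 hst, evalC1 htt, F0, G0, F1, G1, F2, G2, F3, G3, F4, G4, F5, G5, F6, G6, F7, G7, F8, G8, ← hu, ← hv]
        linear_combination (0) * huv + (((-1)/2)*v*f*c2*tt.coeff 0 + ((-1)/2)*v*f*c2*c3*tt.coeff 1 + ((1)/2)*v*e*c2*tt.coeff 0 + ((1)/2)*v*e*c2*c3*tt.coeff 1 + (-1)*v*e*f*c2*st.coeff 1 + (-2)*v*e*f*c2*c3*st.coeff 2 + (1)*v*e^2*c2*st.coeff 1 + (2)*v*e^2*c2*c3*st.coeff 2 + ((1)/2)*v*e^2*f*c2*tt.coeff 0 + ((1)/2)*v*e^2*f*c2*c3*tt.coeff 1 + ((-1)/2)*v*e^3*c2*tt.coeff 0 + ((-1)/2)*v*e^3*c2*c3*tt.coeff 1 + ((1)/2)*v*e^3*f^2*c2*tt.coeff 0 + ((1)/2)*v*e^3*f^2*c2*c3*tt.coeff 1 + ((-1)/2)*v*e^4*f*c2*tt.coeff 0 + ((-1)/2)*v*e^4*f*c2*c3*tt.coeff 1 + ((-1)/2)*v^2*f^3*c2^2*tt.coeff 1 + (-1)*v^2*e*f^3*c2^2*st.coeff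 2 + ((1)/2)*v^2*e^3*c2^2*tt.coeff 1 + (-1)*v^2*e^3*f^3*c2^2*st.coeff 2 + (1)*v^2*e^4*c2^2*st.coeff 2 + ((1)/2)*v^2*e^4*f*c2^2*tt.coeff 1 + ((-1)/2)*v^2*e^5*c2^2*tt.coeff 1 + (1)*v^2*e^5*f*c2^2*st.coeff 2 + ((1)/2)*v^2*e^5*f^2*c2^2*tt.coeff 1 + (-1)*v^2*e^5*f^3*c2^2*st.coeff 2 + ((-1)/2)*v^2*e^6*f*c2^2*tt.coeff 1 + (1)*v^2*e^6*f^2*c2^2*st.coeff 2 + ((1)/2)*v^2*e^6*f^3*c2^2*tt.coeff 1 + ((-1)/2)*v^2*e^7*f^2*c2^2*tt.coeff 1 + ((1)/2)*v^2*e^7*f^4*c2^2*tt.coeff 1 + ((-1)/2)*v^2*e^8*f^3*c2^2*tt.coeff 1 + ((1)/2)*u*f*c1*tt.coeff 0 + ((1)/2)*u*f*c1*c3*tt.coeff 1 + ((-1)/2)*u*e*c1*tt.coeff 0 + ((-1)/2)*u*e*c1*c3*tt.coeff 1 + (1)*u*e*f*c1*st.coeff 1 + (2)*u*e*f*c1*c3*st.coeff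 2 + (-1)*u*e^2*c1*st.coeff 1 + (-2)*u*e^2*c1*c3*st.coeff 2 + ((-1)/2)*u*e^2*f*c1*tt.coeff 0 + ((-1)/2)*u*e^2*f*c1*c3*tt.coeff 1 + ((1)/2)*u*e^3*c1*tt.coeff 0 + ((1)/2)*u*e^3*c1*c3*tt.coeff 1 + ((-1)/2)*u*e^3*f^2*c1*tt.coeff 0 + ((-1)/2)*u*e^3*f^2*c1*c3*tt.coeff 1 + ((1)/2)*u*e^4*f*c1*tt.coeff 0 + ((1)/2)*u*e^4*f*c1*c3*tt.coeff 1 + ((1)/2)*u^2*f^3*c1^2*tt.coeff 1 + (1)*u^2*e*f^3*c1^2*st.coeff 2 + ((-1)/2)*u^2*e^3*c1^2*tt.coeff 1 + (1)*u^2*e^3*f^3*c1^2*st.coeff 2 + (-1)*u^2*e^4*c1^2*st.coeff 2 + ((-1)/2)*u^2*e^4*f*c1^2*tt.coeff 1 + ((1)/2)*u^2*e^5*c1^2*tt.coeff 1 + (-1)*u^2*e^5*f*c1^2*st.coeff 2 + ((-1)/2)*u^2*e^5*f^2*c1^2*tt.coeff 1 + (1)*u^2*e^5*f^3*c1^2*st.coeff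 2 + ((1)/2)*u^2*e^6*f*c1^2*tt.coeff 1 + (-1)*u^2*e^6*f^2*c1^2*st.coeff 2 + ((-1)/2)*u^2*e^6*f^3*c1^2*tt.coeff 1 + ((1)/2)*u^2*e^7*f^2*c1^2*tt.coeff 1 + ((-1)/2)*u^2*e^7*f^4*c1^2*tt.coeff 1 + ((1)/2)*u^2*e^8*f^3*c1^2*tt.coeff 1) * hef
      exact mul_right_cancel₀ h3 (hTz.trans key.symm)
  · -- quadratic case
    set s0 := st.coeff 0; set s1 := st.coeff 1; set s2 := st.coeff 2
    set t0 := tt.coeff 0; set t1 := tt.coeff 1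
    refine ⟨s2, s1 + 6*c1*s2 - 3*c1*t1,
      s0 + s1*c1 + s2*c1^2 - c1*t0 - c1^2*t1 + (s2 - t1/2)*(c2^2 - 4*c1*c3),
      t1 - 4*s2, -2*s1 - 4*s2*c1 + t0 + 3*t1*c1, ?_⟩
    intro wf z h1 h2 h3
    have hTz := hT (-2) (z+1)
    rw [show ((-2:ℝ)+1 : ℝ) = -1 from by norm_num] at hTz
    push_cast at hTz
    rw [show z+1+(-2:ℂ) = z-1 from by ring, show z+1-1 = z from by ring,
      show z-1-1 = z-2 from by ring] at hTz
    refine ⟨part1 x _ _ _ wf z h3, ?_, ?_⟩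
    · rw [show (1:ℂ)/2 * T (-2) (z+1) * (xl x (-1) (z+1) - xl x (-1) z)
          = 1/2 * (T (-2) (z+1) * (xl x (-1) (z+1) - xl x (-1) z)) from mul_assoc _ _ _,
        hTz]
      simp only [sig, xl, hx, evalC2 hst, evalC1 htt]
      push_cast
      ring
    · have key : (( t1 - 4*s2) * x z + (-2*s1 - 4*s2*c1 + t0 + 3*t1*c1)) *
          (xl x (-1) (z+1) - xl x (-1) z) =
          sig x st tt (z-1) - sig x st tt (z+1) +
            Polynomial.eval (x (z-1)) tt * (xl x 1 (z-1) - xl x 1 (z-2)) := by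
        simp only [sig, xl, hx, evalC2 hst, evalC1 htt]
        push_cast
        ring
      exact mul_right_cancel₀ h3 (hTz.trans key.symm)
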